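/- In the simplicial setup, suppose that for every equivalence class Γ_i of B_A, the associated monomial ideal Ĩ_i = (y^{(b−h_i)/α} : b ∈ Γ_i) ⊂ T (where h_i is the componentwise minimum of Γ_i) is either the unit ideal T or is generated by monomials of degree 1. Then every monomial in N₁ ∪ N₂ has total degree at most r(K[B]) + 1; in particular, the initial ideal in_≺(ker π) is generated by monomials of degree at most r(K[B]) + 1. -/

import Mathlib

namespace SimplicialToric

/-- `eVec d α i` is `α` times the `i`-th standard basis vector of `ℕ^d`. -/
def eVec (d α : ℕ) (i : Fin d) : Fin d → ℕ := fun j => if j = i then α else 0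

/-- The Hilbert basis of a submonoid `B ⊆ ℕ^d`: the set of irreducible elements
(in `ℕ^d` the only unit is `0`). -/
def Hilb {d : ℕ} (B : AddSubmonoid (Fin d → ℕ)) : Set (Fin d → ℕ) :=
  {b | b ∈ B ∧ b ≠ 0 ∧ ∀ x ∈ B, ∀ y ∈ B, b = x + y → x = 0 ∨ y = 0}

/-- The submonoid `A = Σᵢ ℤ≥0·eᵢ = αℤ≥0^d`. -/
def Amon (d α : ℕ) : AddSubmonoid (Fin d → ℕ) :=
  AddSubmonoid.closure (Set.range (eVec d α))

/-- `B_A = {x ∈ B : x − a ∉ B for every a ∈ A \ {0}}`. -/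
def BA {d : ℕ} (B : AddSubmonoid (Fin d → ℕ)) (α : ℕ) : Set (Fin d → ℕ) :=
  {x | x ∈ B ∧ ∀ z ∈ Amon d α, z ≠ 0 → ∀ y ∈ B, x ≠ y + z}

/-- The generators `a₁,…,a_c,e₁,…,e_d` of `B`, indexed by the variables of
`S = K[x₁,…,x_c,y₁,…,y_d]`; variable `Fin.castAdd d i` is `xᵢ`, variable
`Fin.natAdd c j` is `yⱼ`. -/
def gens (c d α : ℕ) (a : Fin c → Fin d → ℕ) : Fin (c + d) → Fin d → ℕ :=
  Fin.addCases a (eVec d α)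

/-- The element of `B` represented by the monomial with exponent vector `σ`:
`π(x^μ y^ν) = t^(valE σ)`. -/
def valE (c d α : ℕ) (a : Fin c → Fin d → ℕ) (σ : Fin (c + d) →₀ ℕ) : Fin d → ℕ :=
  ∑ v : Fin (c + d), σ v • gens c d α a v

/-- total degree of a monomial (exponent vector). -/
def degE {N : ℕ} (σ : Fin N →₀ ℕ) : ℕ := ∑ v, σ v

/-- the graded reverse lexicographic order: `grevlex σ τ` means `σ ≺ τ`,
i.e. `deg σ < deg τ`, or degrees agree and the last nonzero entry of `τ − σ`
is negative. -/
def grevlex {N : ℕ} (σ τ : Fin N →₀ ℕ) : Prop :=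
  degE σ < degE τ ∨ (degE σ = degE τ ∧ ∃ k, τ k < σ k ∧ ∀ l, k < l → σ l = τ l)

/-- `x ∼ y` iff `x − y ∈ gp(A) = αℤ^d`. -/
def Rel {d : ℕ} (α : ℕ) (x y : Fin d → ℕ) : Prop :=
  ∀ j, (α : ℤ) ∣ (x j : ℤ) - (y j : ℤ)

/-- `Γ` is an equivalence class of `B_A` modulo `αℤ^d`. -/
def IsClass {d : ℕ} (B : AddSubmonoid (Fin d → ℕ)) (α : ℕ) (Γ : Set (Fin d → ℕ)) : Prop :=
  ∃ x ∈ BA B α, Γ = {y | y ∈ BA B α ∧ Rel α x y}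

/-- the total order on an equivalence class of `B_A`: `b ≺ c` iff the last
nonzero entry of `b − c` is negative. -/
def ltCls {d : ℕ} (x y : Fin d → ℕ) : Prop :=
  ∃ k, x k < y k ∧ ∀ l, k < l → x l = y l

/-- `joinSub x y = x∨y − y`, where `x∨y` is the componentwise maximum. -/
def joinSub {d : ℕ} (x y : Fin d → ℕ) : Fin d → ℕ := fun j => max (x j) (y j) - y j

/-- the monomial with exponents `σ` lies in `T = K[y₁,…,y_d]`. -/
def yOnly (c d : ℕ) (σ : Fin (c + d) →₀ ℕ) : Prop := ∀ i : Fin c, σ (Fin.castAdd d i) = 0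

/-- the monomial with exponents `σ` involves only the `x`-variables. -/
def xOnly (c d : ℕ) (σ : Fin (c + d) →₀ ℕ) : Prop := ∀ j : Fin d, σ (Fin.natAdd c j) = 0

/-- the set `N₁`, for a given choice `m` of the minimal monomials `m_b`. -/
def N1set (c d α : ℕ) (a : Fin c → Fin d → ℕ) (B : AddSubmonoid (Fin d → ℕ))
    (m : (Fin d → ℕ) → (Fin (c + d) →₀ ℕ)) : Set (Fin (c + d) →₀ ℕ) :=
  {n | ∃ (i : Fin c) (b : Fin d → ℕ), b ∈ BA B α ∧
    n = Finsupp.single (Fin.castAdd d i) 1 + m b ∧ n ≠ m (a i + b)}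

/-- the set `N₂ = ∪_Γ N_Γ`, where `N_Γ = {n(bᵢ,bⱼ) = m_{bⱼ}·m_{bᵢ∨bⱼ−bⱼ} : bᵢ ≺ bⱼ in Γ}`. -/
def N2set {d : ℕ} (c α : ℕ) (B : AddSubmonoid (Fin d → ℕ))
    (m : (Fin d → ℕ) → (Fin (c + d) →₀ ℕ)) : Set (Fin (c + d) →₀ ℕ) :=
  {n | ∃ Γ, IsClass B α Γ ∧ ∃ bi ∈ Γ, ∃ bj ∈ Γ, ltCls bi bj ∧ n = m bj + m (joinSub bi bj)}

/-- `σ` is the exponent vector of the initial (i.e. `≺`-largest) term of `f`. -/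
def IsLeadMon {N : ℕ} {K : Type*} [Field K] (f : MvPolynomial (Fin N) K)
    (σ : Fin N →₀ ℕ) : Prop :=
  σ ∈ f.support ∧ ∀ τ ∈ f.support, τ = σ ∨ grevlex τ σ

/-- the initial ideal of `I` with respect to the graded reverse lexicographic order. -/
noncomputable def initialIdeal {N : ℕ} {K : Type*} [Field K] (I : Ideal (MvPolynomial (Fin N) K)) :
    Ideal (MvPolynomial (Fin N) K) :=
  Ideal.span {g | ∃ f ∈ I, ∃ σ, IsLeadMon f σ ∧ g = MvPolynomial.monomial σ (1 : K)}

end SimplicialToric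

open SimplicialToric

namespace SimplicialToric

section L1
variable {c d α : ℕ} {a : Fin c → Fin d → ℕ} {B : AddSubmonoid (Fin d → ℕ)}

lemma degE_add {N : ℕ} (σ τ : Fin N →₀ ℕ) : degE (σ + τ) = degE σ + degE τ := by
  simp [degE, Finsupp.add_apply, Finset.sum_add_distrib]

lemma degE_single {N : ℕ} (v : Fin N) (n : ℕ) : degE (Finsupp.single v n) = n := by
  simp [degE, Finsupp.single_apply]

lemma degE_eq_zero {N : ℕ} (σ : Fin N →₀ ℕ) : degE σ = 0 ↔ σ = 0 := by
  constructor
  · intro h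
    ext v
    have := Finset.sum_eq_zero_iff.mp h v (Finset.mem_univ v)
    simpa using this
  · rintro rfl; simp [degE]

lemma degE_lt_of_lt {N : ℕ} {σ τ : Fin N →₀ ℕ} (hle : σ ≤ τ) (hne : σ ≠ τ) :
    degE σ < degE τ := by
  have h1 : ∀ v, σ v ≤ τ v := fun v => Finsupp.le_def.mp hle v
  have h2 : ∃ v, σ v < τ v := by
    by_contra hc
    push_neg at hc
    exact hne (Finsupp.ext fun v => le_antisymm (h1 v) (hc v))
  obtain ⟨v, hv⟩ := h2
  exact Finset.sum_lt_sum (fun i _ => h1 i) ⟨v, Finset.mem_univ v, hv⟩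

lemma valE_apply (σ : Fin (c + d) →₀ ℕ) (j : Fin d) :
    valE c d α a σ j =
      (∑ i, σ (Fin.castAdd d i) * a i j) + α * σ (Fin.natAdd c j) := by
  have : valE c d α a σ j = ∑ v, σ v * gens c d α a v j := by
    simp [valE, Finset.sum_apply]
  rw [this, Fin.sum_univ_add]
  congr 1
  · apply Finset.sum_congr rfl
    intro i _
    rw [show gens c d α a (Fin.castAdd d i) = a i from Fin.addCases_left i]
  · have h1 : ∀ l : Fin d, gens c d α a (Fin.natAdd c l) = eVec d α l :=
      fun l => Fin.addCases_right l
    simp only [h1, eVec]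
    rw [Finset.sum_congr rfl (fun l _ => by rw [mul_ite, mul_zero])]
    rw [Finset.sum_ite_eq Finset.univ j (fun l => σ (Fin.natAdd c l) * α)]
    simp [mul_comm]

lemma valE_add (σ τ : Fin (c + d) →₀ ℕ) :
    valE c d α a (σ + τ) = valE c d α a σ + valE c d α a τ := by
  funext j
  simp only [valE_apply, Finsupp.add_apply, Pi.add_apply, mul_add, add_mul, Finset.sum_add_distrib]
  omega

lemma valE_single (v : Fin (c + d)) (n : ℕ) :
    valE c d α a (Finsupp.single v n) = n • gens c d α a v := by
  unfold valE
  rw [Finset.sum_eq_single v]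
  · rw [Finsupp.single_apply, if_pos rfl]
  · intro w _ hw; rw [Finsupp.single_apply, if_neg (fun h => hw h.symm), zero_smul]
  · intro h; exact absurd (Finset.mem_univ _) h

lemma valE_single_natAdd (k : Fin d) :
    valE c d α a (Finsupp.single (Fin.natAdd c k) 1) = eVec d α k := by
  rw [valE_single, show gens c d α a (Fin.natAdd c k) = eVec d α k from Fin.addCases_right k,
    one_smul]

lemma sum_gens (hdeg : ∀ i, ∑ j, a i j = α) (v : Fin (c + d)) :
    ∑ j, gens c d α a v j = α := by
  refine Fin.addCases (fun i => ?_) (fun l => ?_) v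
  · rw [show gens c d α a (Fin.castAdd d i) = a i from Fin.addCases_left i]
    exact hdeg i
  · rw [show gens c d α a (Fin.natAdd c l) = eVec d α l from Fin.addCases_right l]
    simp [eVec]

lemma sum_valE (hdeg : ∀ i, ∑ j, a i j = α) (σ : Fin (c + d) →₀ ℕ) :
    ∑ j, valE c d α a σ j = α * degE σ := by
  have : ∀ j, valE c d α a σ j = ∑ v, σ v * gens c d α a v j := by
    intro j; simp [valE, Finset.sum_apply]
  simp only [this]
  rw [Finset.sum_comm]
  have : ∀ v : Fin (c + d), ∑ j, σ v * gens c d α a v j = σ v * α := by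
    intro v
    rw [← Finset.mul_sum, sum_gens hdeg]
  simp only [this, degE, Finset.mul_sum]
  apply Finset.sum_congr rfl
  intro v _
  ring

lemma gens_mem (hBgen : B = AddSubmonoid.closure (Set.range a ∪ Set.range (eVec d α)))
    (v : Fin (c + d)) : gens c d α a v ∈ B := by
  rw [hBgen]
  apply AddSubmonoid.subset_closure
  refine Fin.addCases (fun i => ?_) (fun l => ?_) v
  · rw [show gens c d α a (Fin.castAdd d i) = a i from Fin.addCases_left i]
    exact Or.inl ⟨i, rfl⟩
  · rw [show gens c d α a (Fin.natAdd c l) = eVec d α l from Fin.addCases_right l]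
    exact Or.inr ⟨l, rfl⟩

lemma valE_mem (hBgen : B = AddSubmonoid.closure (Set.range a ∪ Set.range (eVec d α)))
    (σ : Fin (c + d) →₀ ℕ) : valE c d α a σ ∈ B := by
  exact AddSubmonoid.sum_mem _ (fun v _ => AddSubmonoid.nsmul_mem B (gens_mem hBgen v) _)

lemma B_rep (hBgen : B = AddSubmonoid.closure (Set.range a ∪ Set.range (eVec d α)))
    {b : Fin d → ℕ} (hb : b ∈ B) : ∃ σ, valE c d α a σ = b := by
  rw [hBgen] at hb
  induction hb using AddSubmonoid.closure_induction with
  | mem x hx =>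
    rcases hx with ⟨i, rfl⟩ | ⟨l, rfl⟩
    · exact ⟨Finsupp.single (Fin.castAdd d i) 1, by
        rw [valE_single, show gens c d α a (Fin.castAdd d i) = a i from Fin.addCases_left i,
          one_smul]⟩
    · exact ⟨Finsupp.single (Fin.natAdd c l) 1, valE_single_natAdd l⟩
  | zero => exact ⟨0, by simp [valE]⟩
  | add x y _ _ ihx ihy =>
    obtain ⟨σ, rfl⟩ := ihx
    obtain ⟨τ, rfl⟩ := ihy
    exact ⟨σ + τ, (valE_add σ τ)⟩

end L1

section L2
variable {c d α : ℕ} {a : Fin c → Fin d → ℕ} {B : AddSubmonoid (Fin d → ℕ)}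

lemma grevlex_irrefl {N : ℕ} (σ : Fin N →₀ ℕ) : ¬ grevlex σ σ := by
  rintro (h | ⟨_, k, hk, _⟩)
  · exact lt_irrefl _ h
  · exact lt_irrefl _ hk

lemma grevlex_asymm {N : ℕ} {σ τ : Fin N →₀ ℕ} (h1 : grevlex σ τ) (h2 : grevlex τ σ) :
    False := by
  rcases h1 with h1 | ⟨e1, k1, hk1, hl1⟩ <;> rcases h2 with h2 | ⟨e2, k2, hk2, hl2⟩
  · omega
  · omega
  · omega
  · rcases lt_trichotomy k1 k2 with h | h | h
    · exact absurd (hl1 k2 h) (by omega)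
    · subst h; omega
    · exact absurd (hl2 k1 h) (by omega)

lemma grevlex_add_left {N : ℕ} {σ τ : Fin N →₀ ℕ} (ρ : Fin N →₀ ℕ) (h : grevlex σ τ) :
    grevlex (ρ + σ) (ρ + τ) := by
  rcases h with h | ⟨e, k, hk, hl⟩
  · left; rw [degE_add, degE_add]; omega
  · right
    refine ⟨by rw [degE_add, degE_add]; omega, k, ?_, ?_⟩
    · simp only [Finsupp.add_apply]; omega
    · intro l hl'
      simp only [Finsupp.add_apply, hl l hl']

lemma le'_antisymm {N : ℕ} {σ τ : Fin N →₀ ℕ} (h1 : σ = τ ∨ grevlex σ τ)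
    (h2 : τ = σ ∨ grevlex τ σ) : σ = τ := by
  rcases h1 with h1 | h1
  · exact h1
  rcases h2 with h2 | h2
  · exact h2.symm
  · exact absurd h1 (fun h => grevlex_asymm h h2)

lemma rep_degE_eq (hα : 0 < α) (hdeg : ∀ i, ∑ j, a i j = α) {σ τ : Fin (c + d) →₀ ℕ}
    (h : valE c d α a σ = valE c d α a τ) : degE σ = degE τ := by
  have h1 := sum_valE (a := a) hdeg σ
  have h2 := sum_valE (a := a) hdeg τ
  rw [h] at h1
  exact Nat.eq_of_mul_eq_mul_left hα (h1.symm.trans h2)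

lemma eVec_mem_Amon (k : Fin d) : eVec d α k ∈ Amon d α :=
  AddSubmonoid.subset_closure ⟨k, rfl⟩

lemma eVec_mem_B (hBgen : B = AddSubmonoid.closure (Set.range a ∪ Set.range (eVec d α)))
    (k : Fin d) : eVec d α k ∈ B := by
  rw [hBgen]; exact AddSubmonoid.subset_closure (Or.inr ⟨k, rfl⟩)

lemma eVec_ne_zero (hα : 0 < α) (k : Fin d) : eVec d α k ≠ 0 := by
  intro h
  have := congrFun h k
  simp [eVec] at this
  omega

lemma mem_Amon_elim {z : Fin d → ℕ} (hz : z ∈ Amon d α) :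
    ∃ n : Fin d → ℕ, ∀ j, z j = α * n j := by
  induction hz using AddSubmonoid.closure_induction with
  | mem x hx =>
    obtain ⟨k, rfl⟩ := hx
    exact ⟨fun j => if j = k then 1 else 0, fun j => by by_cases h : j = k <;> simp [eVec, h]⟩
  | zero => exact ⟨0, fun j => by simp⟩
  | add x y _ _ ihx ihy =>
    obtain ⟨n1, h1⟩ := ihx
    obtain ⟨n2, h2⟩ := ihy
    exact ⟨n1 + n2, fun j => by simp [h1 j, h2 j]; ring⟩

lemma mul_mem_Amon (n : Fin d → ℕ) : (fun j => α * n j) ∈ Amon d α := by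
  have : (fun j => α * n j) = ∑ k, n k • eVec d α k := by
    funext j
    rw [Finset.sum_apply]
    simp only [Pi.smul_apply, smul_eq_mul, eVec, mul_ite, mul_zero]
    rw [Finset.sum_ite_eq Finset.univ j (fun k => n k * α)]
    simp [mul_comm]
  rw [this]
  exact AddSubmonoid.sum_mem _ (fun k _ => AddSubmonoid.nsmul_mem _ (eVec_mem_Amon k) _)

lemma mem_BA_iff {b : Fin d → ℕ} : b ∈ BA B α ↔
    b ∈ B ∧ ∀ z ∈ Amon d α, z ≠ 0 → ∀ y ∈ B, b ≠ y + z := Iff.rfl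

lemma not_BA (hα : 0 < α)
    (hBgen : B = AddSubmonoid.closure (Set.range a ∪ Set.range (eVec d α)))
    {b : Fin d → ℕ} (hb : b ∈ B) :
    b ∉ BA B α ↔ ∃ k, ∃ y ∈ B, b = y + eVec d α k := by
  constructor
  · intro h
    rw [mem_BA_iff] at h
    push_neg at h
    obtain ⟨z, hz, hz0, y, hy, hbe⟩ := h hb
    obtain ⟨n, hn⟩ := mem_Amon_elim hz
    have hex : ∃ k, 0 < n k := by
      by_contra hc
      push_neg at hc
      exact hz0 (funext fun j => by
        have h1 := hn j; have h2 := hc j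
        simp only [Pi.zero_apply]
        rw [h1, Nat.le_zero.mp h2, mul_zero])
    obtain ⟨k, hk⟩ := hex
    refine ⟨k, y + fun j => α * (n j - if j = k then 1 else 0), ?_, ?_⟩
    · exact B.add_mem hy (hBgen ▸ AddSubmonoid.closure_mono Set.subset_union_right
        (mul_mem_Amon _))
    · funext j
      have h1 := hn j
      have hbj : b j = y j + z j := by rw [hbe]; rfl
      simp only [Pi.add_apply, eVec]
      by_cases hj : j = k
      · subst hj
        rw [if_pos rfl, if_pos rfl, Nat.mul_sub, mul_one]
        have h2 : α ≤ α * n j := Nat.le_mul_of_pos_right α hk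
        omega
      · rw [if_neg hj, if_neg hj, Nat.sub_zero]
        omega
  · rintro ⟨k, y, hy, rfl⟩ hBA
    exact hBA.2 (eVec d α k) (eVec_mem_Amon k) (eVec_ne_zero hα k) y hy rfl

lemma castAdd_lt_natAdd (i : Fin c) (j : Fin d) : Fin.castAdd d i < Fin.natAdd c j := by
  simp only [Fin.lt_def, Fin.coe_castAdd, Fin.coe_natAdd]
  omega

lemma natAdd_lt_natAdd {j l : Fin d} : Fin.natAdd c j < Fin.natAdd c l ↔ j < l := by
  simp only [Fin.lt_def, Fin.coe_natAdd]
  omega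

lemma exists_natAdd_of_gt {k : Fin d} {v : Fin (c + d)} (h : Fin.natAdd c k < v) :
    ∃ l, v = Fin.natAdd c l ∧ k < l := by
  have hv : c + (k : ℕ) < (v : ℕ) := h
  refine ⟨⟨(v : ℕ) - c, by omega⟩, ?_, ?_⟩
  · apply Fin.ext
    simp only [Fin.coe_natAdd]
    omega
  · simp only [Fin.lt_def]
    omega

lemma single_natAdd_castAdd (k : Fin d) (i : Fin c) (n : ℕ) :
    Finsupp.single (Fin.natAdd c k) n (Fin.castAdd d i) = 0 := by
  rw [Finsupp.single_apply, if_neg]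
  exact fun h => absurd (h ▸ castAdd_lt_natAdd i k) (lt_irrefl _)

lemma single_natAdd_natAdd (k l : Fin d) (n : ℕ) :
    Finsupp.single (Fin.natAdd c k) n (Fin.natAdd c l) = if k = l then n else 0 := by
  rw [Finsupp.single_apply]
  congr 1
  simp only [eq_iff_iff]
  constructor
  · intro h; exact Fin.ext (by have := congrArg Fin.val h; simpa using this)
  · intro h; exact h ▸ rfl

end L2

section L3
variable {c d α : ℕ} {a : Fin c → Fin d → ℕ} {B : AddSubmonoid (Fin d → ℕ)}
  {m : (Fin d → ℕ) → (Fin (c + d) →₀ ℕ)}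

lemma fin_split (v : Fin (c + d)) :
    (∃ i : Fin c, v = Fin.castAdd d i) ∨ (∃ j : Fin d, v = Fin.natAdd c j) :=
  Fin.addCases (fun i => Or.inl ⟨i, rfl⟩) (fun j => Or.inr ⟨j, rfl⟩) v

lemma strip_mem (hBgen : B = AddSubmonoid.closure (Set.range a ∪ Set.range (eVec d α)))
    (σ : Fin (c + d) →₀ ℕ) (l : Fin d) (h1 : 1 ≤ σ (Fin.natAdd c l)) :
    ∃ y ∈ B, valE c d α a σ = y + eVec d α l := by
  refine ⟨valE c d α a (σ - Finsupp.single (Fin.natAdd c l) 1), valE_mem hBgen _, ?_⟩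
  have hsub : (σ - Finsupp.single (Fin.natAdd c l) 1) + Finsupp.single (Fin.natAdd c l) 1 = σ :=
    tsub_add_cancel_of_le (Finsupp.single_le_iff.mpr h1)
  conv_lhs => rw [← hsub]
  rw [valE_add, valE_single_natAdd]

lemma standard_add_right
    (hBgen : B = AddSubmonoid.closure (Set.range a ∪ Set.range (eVec d α)))
    (hmval : ∀ b ∈ B, valE c d α a (m b) = b)
    (hmmin : ∀ b ∈ B, ∀ σ, valE c d α a σ = b → m b = σ ∨ grevlex (m b) σ)
    (ρ τ : Fin (c + d) →₀ ℕ) (h : m (valE c d α a (ρ + τ)) = ρ + τ) :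
    m (valE c d α a τ) = τ := by
  have hτB := valE_mem hBgen τ
  rcases hmmin _ hτB τ rfl with heq | hgl
  · exact heq
  exfalso
  have hσ'val : valE c d α a (ρ + m (valE c d α a τ)) = valE c d α a (ρ + τ) := by
    rw [valE_add, valE_add, hmval _ hτB]
  have h2 := hmmin _ (valE_mem hBgen (ρ + τ)) _ hσ'val
  rw [h] at h2
  rcases h2 with heq2 | hgl2
  · have h3 : τ = m (valE c d α a τ) := add_left_cancel heq2
    rw [← h3] at hgl
    exact grevlex_irrefl τ hgl
  · exact grevlex_asymm hgl2 (grevlex_add_left ρ hgl)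

lemma mb_top_pos (hα : 0 < α) (hdeg : ∀ i, ∑ j, a i j = α)
    (hBgen : B = AddSubmonoid.closure (Set.range a ∪ Set.range (eVec d α)))
    (hmval : ∀ b ∈ B, valE c d α a (m b) = b)
    (hmmin : ∀ b ∈ B, ∀ σ, valE c d α a σ = b → m b = σ ∨ grevlex (m b) σ)
    {b y : Fin d → ℕ} {k : Fin d} (hy : y ∈ B) (hbe : b = y + eVec d α k) :
    ∃ k', k ≤ k' ∧ 1 ≤ m b (Fin.natAdd c k') := by
  classical
  have hbB : b ∈ B := hbe ▸ B.add_mem hy (eVec_mem_B hBgen k)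
  set K : Finset (Fin d) :=
    Finset.univ.filter (fun l => ∃ y' ∈ B, b = y' + eVec d α l) with hK
  have hkK : k ∈ K := Finset.mem_filter.mpr ⟨Finset.mem_univ k, y, hy, hbe⟩
  have hKne : K.Nonempty := ⟨k, hkK⟩
  obtain ⟨y', hy', hbe'⟩ := (Finset.mem_filter.mp (K.max'_mem hKne)).2
  refine ⟨K.max' hKne, K.le_max' k hkK, ?_⟩
  set k' := K.max' hKne with hk'
  set τ := m y' + Finsupp.single (Fin.natAdd c k') 1 with hτ
  have hτval : valE c d α a τ = b := by
    rw [hτ, valE_add, hmval y' hy', valE_single_natAdd]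
    exact hbe'.symm
  have hτk' : τ (Fin.natAdd c k') = m y' (Fin.natAdd c k') + 1 := by
    rw [hτ, Finsupp.add_apply, single_natAdd_natAdd, if_pos rfl]
  rcases hmmin b hbB τ hτval with heq | hgl
  · rw [heq, hτk']
    omega
  · by_contra hcon
    have hmb0 : m b (Fin.natAdd c k') = 0 := by omega
    have hdegeq : degE (m b) = degE τ :=
      rep_degE_eq hα hdeg (by rw [hmval b hbB, hτval])
    rcases hgl with hlt | ⟨_, k0, hk0, hl0⟩
    · omega
    have habove : ∀ v, Fin.natAdd c k' < v → m b v = 0 ∧ τ v = 0 := by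
      intro v hv
      obtain ⟨l, rfl, hkl⟩ := exists_natAdd_of_gt hv
      constructor
      · by_contra h0
        have h1 : 1 ≤ m b (Fin.natAdd c l) := Nat.one_le_iff_ne_zero.mpr h0
        obtain ⟨y'', hy'', he⟩ := strip_mem hBgen (m b) l h1
        rw [hmval b hbB] at he
        have hlK : l ∈ K := Finset.mem_filter.mpr ⟨Finset.mem_univ l, y'', hy'', he⟩
        exact absurd (K.le_max' l hlK) (not_le.mpr hkl)
      · rw [hτ, Finsupp.add_apply, single_natAdd_natAdd, if_neg (ne_of_lt hkl)]
        rw [add_zero]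
        by_contra h0
        have h1 : 1 ≤ m y' (Fin.natAdd c l) := Nat.one_le_iff_ne_zero.mpr h0
        obtain ⟨y'', hy'', he⟩ := strip_mem hBgen (m y') l h1
        rw [hmval y' hy'] at he
        have hbl : b = (y'' + eVec d α k') + eVec d α l := by
          rw [hbe', he]
          funext j
          simp only [Pi.add_apply]
          ring
        have hlK : l ∈ K := Finset.mem_filter.mpr
          ⟨Finset.mem_univ l, y'' + eVec d α k', B.add_mem hy'' (eVec_mem_B hBgen k'), hbl⟩
        exact absurd (K.le_max' l hlK) (not_le.mpr hkl)
    rcases lt_trichotomy k0 (Fin.natAdd c k') with h | h | h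
    · have he := hl0 (Fin.natAdd c k') h
      omega
    · rw [h] at hk0
      omega
    · obtain ⟨h1, h2⟩ := habove k0 h
      omega

lemma purex_BA (hα : 0 < α) (hdeg : ∀ i, ∑ j, a i j = α)
    (hBgen : B = AddSubmonoid.closure (Set.range a ∪ Set.range (eVec d α)))
    (hmval : ∀ b ∈ B, valE c d α a (m b) = b)
    (hmmin : ∀ b ∈ B, ∀ σ, valE c d α a σ = b → m b = σ ∨ grevlex (m b) σ)
    (σ : Fin (c + d) →₀ ℕ) (hstd : m (valE c d α a σ) = σ)
    (hx : ∀ j, σ (Fin.natAdd c j) = 0) : valE c d α a σ ∈ BA B α := by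
  by_contra h
  obtain ⟨k, y, hy, hbe⟩ := (not_BA hα hBgen (valE_mem hBgen σ)).mp h
  obtain ⟨k', _, h1⟩ := mb_top_pos hα hdeg hBgen hmval hmmin hy hbe
  rw [hstd, hx k'] at h1
  omega

lemma purey_eq (hα : 0 < α) {ν ν' : Fin (c + d) →₀ ℕ}
    (h1 : ∀ i, ν (Fin.castAdd d i) = 0) (h2 : ∀ i, ν' (Fin.castAdd d i) = 0)
    (hval : valE c d α a ν = valE c d α a ν') : ν = ν' := by
  ext v
  rcases fin_split v with ⟨i, rfl⟩ | ⟨j, rfl⟩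
  · rw [h1 i, h2 i]
  · have h3 := congrFun hval j
    rw [valE_apply, valE_apply] at h3
    simp only [h1, h2, zero_mul, Finset.sum_const_zero, zero_add] at h3
    exact Nat.eq_of_mul_eq_mul_left hα h3

lemma purey_standard (hα : 0 < α) (hdeg : ∀ i, ∑ j, a i j = α)
    (hBgen : B = AddSubmonoid.closure (Set.range a ∪ Set.range (eVec d α)))
    (hmval : ∀ b ∈ B, valE c d α a (m b) = b)
    (hmmin : ∀ b ∈ B, ∀ σ, valE c d α a σ = b → m b = σ ∨ grevlex (m b) σ)
    (σ : Fin (c + d) →₀ ℕ) (hy : ∀ i, σ (Fin.castAdd d i) = 0) :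
    m (valE c d α a σ) = σ := by
  have hbB := valE_mem hBgen σ
  rcases hmmin _ hbB σ rfl with heq | hgl
  · exact heq
  exfalso
  set b := valE c d α a σ with hb
  have hYle : ∀ j, m b (Fin.natAdd c j) ≤ σ (Fin.natAdd c j) := by
    intro j
    have h3 := congrFun (hmval b hbB) j
    have h4 : b j = α * σ (Fin.natAdd c j) := by
      rw [hb, valE_apply]
      simp only [hy, zero_mul, Finset.sum_const_zero, zero_add]
    rw [valE_apply, h4] at h3
    have h5 : α * m b (Fin.natAdd c j) ≤ α * σ (Fin.natAdd c j) := by omega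
    exact Nat.le_of_mul_le_mul_left h5 hα
  have hde : degE (m b) = degE σ := rep_degE_eq hα hdeg (by rw [hmval b hbB])
  rcases hgl with hlt | ⟨_, k, hk, hl⟩
  · omega
  rcases fin_split k with ⟨i, rfl⟩ | ⟨j, rfl⟩
  · have hYeq : ∀ j, m b (Fin.natAdd c j) = σ (Fin.natAdd c j) :=
      fun j => hl _ (castAdd_lt_natAdd i j)
    have e1 : degE (m b) = ∑ i', m b (Fin.castAdd d i') + ∑ j, m b (Fin.natAdd c j) :=
      Fin.sum_univ_add _
    have e2 : degE σ = ∑ i', σ (Fin.castAdd d i') + ∑ j, σ (Fin.natAdd c j) :=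
      Fin.sum_univ_add _
    have e3 : ∑ j, m b (Fin.natAdd c j) = ∑ j, σ (Fin.natAdd c j) :=
      Finset.sum_congr rfl (fun j _ => hYeq j)
    have e4 : ∑ i', σ (Fin.castAdd d i') = 0 :=
      Finset.sum_eq_zero (fun i' _ => hy i')
    have e5 : ∑ i', m b (Fin.castAdd d i') = 0 := by omega
    have e6 : m b (Fin.castAdd d i) = 0 :=
      Finset.sum_eq_zero_iff.mp e5 i (Finset.mem_univ i)
    rw [e6, hy i] at hk
    omega
  · have := hYle j
    omega

lemma deg_m_le_r (hα : 0 < α) (hdeg : ∀ i, ∑ j, a i j = α)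
    (hmval : ∀ b ∈ B, valE c d α a (m b) = b)
    {r : ℕ} (hr : IsGreatest {k | ∃ b ∈ BA B α, ∑ j, b j = α * k} r)
    {b : Fin d → ℕ} (hb : b ∈ BA B α) : degE (m b) ≤ r := by
  have hbB : b ∈ B := hb.1
  have h1 : ∑ j, b j = α * degE (m b) := by
    have h0 := sum_valE hdeg (m b)
    rw [hmval b hbB] at h0
    exact h0
  exact hr.2 ⟨b, hb, h1⟩

end L3

section L4
variable {c d α : ℕ} {a : Fin c → Fin d → ℕ} {B : AddSubmonoid (Fin d → ℕ)}
  {m : (Fin d → ℕ) → (Fin (c + d) →₀ ℕ)}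

lemma rel_refl (x : Fin d → ℕ) : Rel α x x := fun j => by simp

lemma ltCls_irrefl (x : Fin d → ℕ) : ¬ ltCls x x := by
  rintro ⟨k, hk, _⟩
  omega

lemma class_least (Γ : Set (Fin d → ℕ)) {x : Fin d → ℕ} (hx : x ∈ Γ) (j : Fin d) :
    IsLeast {v | ∃ b ∈ Γ, v = b j} (sInf {v | ∃ b ∈ Γ, v = b j}) :=
  ⟨Nat.sInf_mem ⟨x j, x, hx, rfl⟩, fun _ hv => Nat.sInf_le hv⟩

lemma class_dvd_sub {x : Fin d → ℕ} {Γ : Set (Fin d → ℕ)}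
    (hΓ : Γ = {y | y ∈ BA B α ∧ Rel α x y}) {u w : Fin d → ℕ}
    (hu : u ∈ Γ) (hw : w ∈ Γ) (j : Fin d) : (α : ℤ) ∣ (u j : ℤ) - w j := by
  rw [hΓ] at hu hw
  have r1 := hu.2 j
  have r2 := hw.2 j
  have := dvd_sub r2 r1
  have he : ((x j : ℤ) - w j) - ((x j : ℤ) - u j) = (u j : ℤ) - w j := by ring
  rwa [he] at this

lemma class_singleton (hα : 0 < α)
    {x : Fin d → ℕ} {Γ : Set (Fin d → ℕ)}
    (hΓ : Γ = {y | y ∈ BA B α ∧ Rel α x y}) {h : Fin d → ℕ}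
    (hls : ∀ j, IsLeast {v | ∃ b ∈ Γ, v = b j} (h j)) (hhΓ : h ∈ Γ)
    {b' : Fin d → ℕ} (hb' : b' ∈ Γ) : b' = h := by
  have hle : ∀ j, h j ≤ b' j := fun j => (hls j).2 ⟨b', hb', rfl⟩
  have hdvd : ∀ j, α ∣ (b' j - h j) := by
    intro j
    have r3 : (α : ℤ) ∣ ((b' j : ℤ) - h j) := class_dvd_sub hΓ hb' hhΓ j
    have r4 : ((b' j - h j : ℕ) : ℤ) = (b' j : ℤ) - h j := by
      rw [Nat.cast_sub (hle j)]
    rw [← r4] at r3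
    exact_mod_cast r3
  by_cases hz : ∀ j, b' j = h j
  · exact funext hz
  · exfalso
    push_neg at hz
    have hzA : (fun j => b' j - h j) ∈ Amon d α := by
      have he : (fun j => b' j - h j) = fun j => α * ((b' j - h j) / α) :=
        funext fun j => (Nat.mul_div_cancel' (hdvd j)).symm
      rw [he]
      exact mul_mem_Amon _
    have hz0 : (fun j => b' j - h j) ≠ (0 : Fin d → ℕ) := by
      obtain ⟨j, hj⟩ := hz
      intro h0
      have h1 := congrFun h0 j
      simp only [Pi.zero_apply] at h1
      have := hle j
      omega
    have hhB : h ∈ B := by rw [hΓ] at hhΓ; exact hhΓ.1.1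
    have hbe : b' = h + fun j => b' j - h j := funext fun j => by
      simp only [Pi.add_apply]
      have := hle j
      omega
    rw [hΓ] at hb'
    exact hb'.1.2 _ hzA hz0 h hhB hbe

lemma joinSub_eVec {h : Fin d → ℕ} {k l : Fin d} (hkl : k ≠ l) :
    joinSub (fun j => h j + eVec d α k j) (fun j => h j + eVec d α l j) = eVec d α k := by
  funext j
  simp only [joinSub, eVec]
  by_cases hjk : j = k
  · subst hjk
    rw [if_pos rfl, if_neg hkl]
    omega
  · rw [if_neg hjk]
    by_cases hjl : j = l
    · rw [if_pos hjl]
      omega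
    · rw [if_neg hjl]
      omega

lemma degE_m_eVec (hα : 0 < α) (hdeg : ∀ i, ∑ j, a i j = α)
    (hBgen : B = AddSubmonoid.closure (Set.range a ∪ Set.range (eVec d α)))
    (hmval : ∀ b ∈ B, valE c d α a (m b) = b) (k : Fin d) :
    degE (m (eVec d α k)) = 1 := by
  have hB := eVec_mem_B (a := a) hBgen k
  have h1 := sum_valE hdeg (m (eVec d α k))
  rw [hmval _ hB] at h1
  have h2 : ∑ j, eVec d α k j = α := by simp [eVec]
  rw [h2] at h1
  have h3 : α * 1 = α * degE (m (eVec d α k)) := by rw [mul_one]; exact h1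
  exact (Nat.eq_of_mul_eq_mul_left hα h3).symm

end L4

section L5
variable {c d α : ℕ} {a : Fin c → Fin d → ℕ} {B : AddSubmonoid (Fin d → ℕ)}
  {m : (Fin d → ℕ) → (Fin (c + d) →₀ ℕ)}

lemma valE_apply_ypure {ν : Fin (c + d) →₀ ℕ} (hx : ∀ i, ν (Fin.castAdd d i) = 0)
    (j : Fin d) : valE c d α a ν j = α * ν (Fin.natAdd c j) := by
  rw [valE_apply]
  simp [hx]

lemma part_split (σ : Fin (c + d) →₀ ℕ) :
    σ = Finsupp.filter (fun v : Fin (c + d) => (v : ℕ) < c) σ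
      + Finsupp.filter (fun v : Fin (c + d) => ¬ (v : ℕ) < c) σ := by
  ext v
  rw [Finsupp.add_apply]
  by_cases hv : (v : ℕ) < c
  · rw [Finsupp.filter_apply_pos (fun v : Fin (c + d) => (v : ℕ) < c) σ hv,
      Finsupp.filter_apply_neg (fun v : Fin (c + d) => ¬ (v : ℕ) < c) σ (not_not_intro hv),
      add_zero]
  · rw [Finsupp.filter_apply_neg (fun v : Fin (c + d) => (v : ℕ) < c) σ hv,
      Finsupp.filter_apply_pos (fun v : Fin (c + d) => ¬ (v : ℕ) < c) σ hv, zero_add]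

lemma xpart_y (σ : Fin (c + d) →₀ ℕ) (j : Fin d) :
    Finsupp.filter (fun v : Fin (c + d) => (v : ℕ) < c) σ (Fin.natAdd c j) = 0 :=
  Finsupp.filter_apply_neg _ _ (by simp [Fin.coe_natAdd])

lemma ypart_x (σ : Fin (c + d) →₀ ℕ) (i : Fin c) :
    Finsupp.filter (fun v : Fin (c + d) => ¬ (v : ℕ) < c) σ (Fin.castAdd d i) = 0 :=
  Finsupp.filter_apply_neg _ _ (by simp [Fin.coe_castAdd])

lemma ypart_y (σ : Fin (c + d) →₀ ℕ) (j : Fin d) :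
    Finsupp.filter (fun v : Fin (c + d) => ¬ (v : ℕ) < c) σ (Fin.natAdd c j) = σ (Fin.natAdd c j) :=
  Finsupp.filter_apply_pos _ _ (by simp [Fin.coe_natAdd])

lemma key_divisor (hα : 0 < α) (hdeg : ∀ i, ∑ j, a i j = α)
    (hBgen : B = AddSubmonoid.closure (Set.range a ∪ Set.range (eVec d α)))
    (hmval : ∀ b ∈ B, valE c d α a (m b) = b)
    (hmmin : ∀ b ∈ B, ∀ σ, valE c d α a σ = b → m b = σ ∨ grevlex (m b) σ)
    {r : ℕ} (hr : IsGreatest {k | ∃ b ∈ BA B α, ∑ j, b j = α * k} r)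
    (hdec : ∀ Γ, IsClass B α Γ → ∀ h : Fin d → ℕ,
      (∀ j, IsLeast {v | ∃ b ∈ Γ, v = b j} (h j)) →
      (h ∈ Γ ∨ ∀ b ∈ Γ, ∃ k : Fin d, b = fun j => h j + eVec d α k j)) :
    ∀ s (σ : Fin (c + d) →₀ ℕ), degE σ ≤ s → σ ≠ m (valE c d α a σ) →
    ∃ σ₀, σ₀ ≤ σ ∧ degE σ₀ ≤ r + 1 ∧ σ₀ ≠ m (valE c d α a σ₀) := by
  intro s
  induction s with
  | zero => exact fun σ hdegσ hns => ⟨σ, le_refl σ, by omega, hns⟩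
  | succ s ih =>
    intro σ hdegσ hns
    by_cases hsmall : degE σ ≤ r + 1
    · exact ⟨σ, le_refl σ, hsmall, hns⟩
    by_cases hprop : ∃ τ, τ ≤ σ ∧ τ ≠ σ ∧ τ ≠ m (valE c d α a τ)
    · obtain ⟨τ, hτle, hτne, hτns⟩ := hprop
      have hlt : degE τ < degE σ := degE_lt_of_lt hτle hτne
      obtain ⟨σ₀, h1, h2, h3⟩ := ih τ (by omega) hτns
      exact ⟨σ₀, le_trans h1 hτle, h2, h3⟩
    exfalso
    push_neg at hprop
    set b := valE c d α a σ with hbdef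
    have hbB : b ∈ B := valE_mem hBgen σ
    -- pure-y case
    by_cases hx0 : ∀ i, σ (Fin.castAdd d i) = 0
    · exact hns (purey_standard hα hdeg hBgen hmval hmmin σ hx0).symm
    -- pure-x case
    by_cases hy0 : ∀ j, σ (Fin.natAdd c j) = 0
    · have hσne : σ ≠ 0 := by
        intro h0
        rw [h0] at hsmall
        exact hsmall (by rw [(degE_eq_zero (0 : Fin (c + d) →₀ ℕ)).mpr rfl]; omega)
      have hex : ∃ v, σ v ≠ 0 := by
        by_contra hc
        push_neg at hc
        exact hσne (Finsupp.ext fun v => hc v)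
      obtain ⟨v, hv⟩ := hex
      obtain ⟨i, rfl⟩ | ⟨j, rfl⟩ := fin_split v
      swap
      · exact hv (hy0 j)
      set τ := σ - Finsupp.single (Fin.castAdd d i) 1 with hτdef
      have hle1 : Finsupp.single (Fin.castAdd d i) 1 ≤ σ :=
        Finsupp.single_le_iff.mpr (by omega)
      have hσeq : τ + Finsupp.single (Fin.castAdd d i) 1 = σ := tsub_add_cancel_of_le hle1
      have hτle : τ ≤ σ := by
        intro v'
        rw [hτdef, Finsupp.tsub_apply]
        omega
      have hτne : τ ≠ σ := by
        intro he
        have h1 : τ (Fin.castAdd d i) = σ (Fin.castAdd d i) - 1 := by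
          rw [hτdef, Finsupp.tsub_apply, Finsupp.single_apply, if_pos rfl]
        rw [he] at h1
        omega
      have hτstd := hprop τ hτle hτne
      have hτy : ∀ j, τ (Fin.natAdd c j) = 0 := by
        intro j
        rw [hτdef, Finsupp.tsub_apply, hy0 j]
        exact Nat.zero_sub _
      have hτBA : valE c d α a τ ∈ BA B α :=
        purex_BA hα hdeg hBgen hmval hmmin τ hτstd.symm hτy
      have hdτ : degE (m (valE c d α a τ)) ≤ r := deg_m_le_r hα hdeg hmval hr hτBA
      rw [← hτstd] at hdτ
      have hdadd : degE τ + 1 = degE σ := by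
        rw [← hσeq, degE_add, degE_single]
      omega
    -- main case
    push_neg at hx0 hy0
    set μ := Finsupp.filter (fun v : Fin (c + d) => (v : ℕ) < c) σ with hμdef
    set ν := Finsupp.filter (fun v : Fin (c + d) => ¬ (v : ℕ) < c) σ with hνdef
    have hsplitσ : σ = μ + ν := part_split σ
    have hμy : ∀ j, μ (Fin.natAdd c j) = 0 := fun j => xpart_y σ j
    have hνx : ∀ i, ν (Fin.castAdd d i) = 0 := fun i => ypart_x σ i
    have hνy : ∀ j, ν (Fin.natAdd c j) = σ (Fin.natAdd c j) := fun j => ypart_y σ j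
    have hμle : μ ≤ σ := by
      intro v
      conv_rhs => rw [hsplitσ]
      rw [Finsupp.add_apply]
      omega
    have hμne : μ ≠ σ := by
      obtain ⟨j, hj⟩ := hy0
      intro he
      rw [← he, hμy j] at hj
      exact hj rfl
    have hμstd : μ = m (valE c d α a μ) := hprop μ hμle hμne
    set bμ := valE c d α a μ with hbμdef
    have hbμBA : bμ ∈ BA B α := purex_BA hα hdeg hBgen hmval hmmin μ hμstd.symm hμy
    -- decomposition of m b
    set μ' := Finsupp.filter (fun v : Fin (c + d) => (v : ℕ) < c) (m b) with hμ'def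
    set ν' := Finsupp.filter (fun v : Fin (c + d) => ¬ (v : ℕ) < c) (m b) with hν'def
    have hsplit' : m b = μ' + ν' := part_split (m b)
    have hμ'y : ∀ j, μ' (Fin.natAdd c j) = 0 := fun j => xpart_y (m b) j
    have hν'x : ∀ i, ν' (Fin.castAdd d i) = 0 := fun i => ypart_x (m b) i
    have hmbstd : m (valE c d α a (m b)) = m b := by rw [hmval b hbB]
    have hμ'std : m (valE c d α a μ') = μ' := by
      apply standard_add_right hBgen hmval hmmin ν' μ'
      rw [← add_comm μ' ν', ← hsplit']
      exact hmbstd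
    set b' := valE c d α a μ' with hb'def
    have hb'BA : b' ∈ BA B α := purex_BA hα hdeg hBgen hmval hmmin μ' hμ'std hμ'y
    -- coordinate formulas
    have hbν : ∀ j, b j = bμ j + α * ν (Fin.natAdd c j) := by
      intro j
      have h1 : b = valE c d α a μ + valE c d α a ν := by
        rw [hbdef]
        conv_lhs => rw [hsplitσ]
        exact valE_add μ ν
      have h2 : b j = valE c d α a μ j + valE c d α a ν j := by rw [h1]; rfl
      rw [valE_apply_ypure hνx] at h2
      exact h2
    have hbν' : ∀ j, b j = b' j + α * ν' (Fin.natAdd c j) := by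
      intro j
      have h1 : b = valE c d α a μ' + valE c d α a ν' := by
        conv_lhs => rw [← hmval b hbB, hsplit']
        exact valE_add μ' ν'
      have h2 : b j = valE c d α a μ' j + valE c d α a ν' j := by rw [h1]; rfl
      rw [valE_apply_ypure hν'x] at h2
      exact h2
    -- the class
    have hrel : Rel α bμ b' := by
      intro j
      have h1 := hbν j
      have h2 := hbν' j
      have h3 : (bμ j : ℤ) + α * ν (Fin.natAdd c j) = (b' j : ℤ) + α * ν' (Fin.natAdd c j) := by
        have h4 : bμ j + α * ν (Fin.natAdd c j) = b' j + α * ν' (Fin.natAdd c j) := by omega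
        exact_mod_cast h4
      exact ⟨(ν' (Fin.natAdd c j) : ℤ) - ν (Fin.natAdd c j), by linear_combination h3⟩
    set Γ : Set (Fin d → ℕ) := {y | y ∈ BA B α ∧ Rel α bμ y} with hΓdef
    have hbμΓ : bμ ∈ Γ := ⟨hbμBA, rel_refl bμ⟩
    have hb'Γ : b' ∈ Γ := ⟨hb'BA, hrel⟩
    have hcls : IsClass B α Γ := ⟨bμ, hbμBA, hΓdef⟩
    set h0 : Fin d → ℕ := fun j => sInf {v | ∃ b'' ∈ Γ, v = b'' j} with hh0def
    have hls : ∀ j, IsLeast {v | ∃ b'' ∈ Γ, v = b'' j} (h0 j) :=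
      fun j => class_least Γ hbμΓ j
    -- contradiction helper
    have hcontra_eq : b' = bμ → False := by
      intro he
      have hννeq : ν = ν' := by
        ext v
        obtain ⟨i, rfl⟩ | ⟨j, rfl⟩ := fin_split v
        · rw [hνx i, hν'x i]
        · have h1 := hbν j
          have h2 := hbν' j
          rw [he] at h2
          have h3 : α * ν (Fin.natAdd c j) = α * ν' (Fin.natAdd c j) := by omega
          exact Nat.eq_of_mul_eq_mul_left hα h3
      have hμμeq : μ = μ' := by
        calc μ = m (valE c d α a μ) := hμstd
        _ = m (valE c d α a μ') := by rw [← hbμdef, ← hb'def, he]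
        _ = μ' := hμ'std
      exact hns (by rw [hsplitσ, hμμeq, hννeq, ← hsplit'])
    rcases hdec Γ hcls h0 hls with hh0Γ | hstruct
    · exact hcontra_eq ((class_singleton hα hΓdef hls hh0Γ hb'Γ).trans
        (class_singleton hα hΓdef hls hh0Γ hbμΓ).symm)
    obtain ⟨q, hq⟩ := hstruct bμ hbμΓ
    obtain ⟨p, hp⟩ := hstruct b' hb'Γ
    have hpq : p ≠ q := fun he => hcontra_eq (by rw [hp, hq, he])
    have hE : ∀ j, (h0 j + eVec d α q j) + α * ν (Fin.natAdd c j)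
        = (h0 j + eVec d α p j) + α * ν' (Fin.natAdd c j) := by
      intro j
      have h1 := hbν j
      have h2 := hbν' j
      have e1 : bμ j = h0 j + eVec d α q j := by rw [hq]
      have e2 : b' j = h0 j + eVec d α p j := by rw [hp]
      omega
    have hνp : ν (Fin.natAdd c p) = ν' (Fin.natAdd c p) + 1 := by
      have h1 := hE p
      rw [show eVec d α q p = 0 from if_neg hpq,
        show eVec d α p p = α from if_pos rfl] at h1
      have h2 : α * ν (Fin.natAdd c p) = α * (ν' (Fin.natAdd c p) + 1) := by
        rw [mul_add, mul_one]
        omega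
      exact Nat.eq_of_mul_eq_mul_left hα h2
    have hνother : ∀ l, l ≠ p → l ≠ q → ν (Fin.natAdd c l) = ν' (Fin.natAdd c l) := by
      intro l hlp hlq
      have h1 := hE l
      rw [show eVec d α q l = 0 from if_neg hlq, show eVec d α p l = 0 from if_neg hlp] at h1
      have h2 : α * ν (Fin.natAdd c l) = α * ν' (Fin.natAdd c l) := by omega
      exact Nat.eq_of_mul_eq_mul_left hα h2
    -- p < q
    have hplt : p < q := by
      rcases lt_trichotomy p q with hh | hh | hh
      · exact hh
      · exact absurd hh hpq
      exfalso
      have hglmb : grevlex (m b) σ := by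
        rcases hmmin b hbB σ hbdef.symm with heq | hgl
        · exact absurd heq.symm hns
        · exact hgl
      have hmbp : m b (Fin.natAdd c p) = ν' (Fin.natAdd c p) := by
        rw [hsplit', Finsupp.add_apply, hμ'y p, zero_add]
      have hdiff : σ (Fin.natAdd c p) = m b (Fin.natAdd c p) + 1 := by
        rw [hmbp, ← hνy p, hνp]
      have habove : ∀ v, Fin.natAdd c p < v → m b v = σ v := by
        intro v hv
        obtain ⟨l, rfl, hpl⟩ := exists_natAdd_of_gt hv
        have e1 : m b (Fin.natAdd c l) = ν' (Fin.natAdd c l) := by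
          rw [hsplit', Finsupp.add_apply, hμ'y l, zero_add]
        rw [e1, ← hνy l]
        exact (hνother l (by intro he; rw [he] at hpl; omega)
          (by intro he; rw [he] at hpl; omega)).symm
      rcases hglmb with hlt | ⟨_, k0, hk0, hl0⟩
      · have := rep_degE_eq hα hdeg (show valE c d α a (m b) = valE c d α a σ by
          rw [hmval b hbB, hbdef])
        omega
      rcases lt_trichotomy k0 (Fin.natAdd c p) with h3 | h3 | h3
      · have := hl0 _ h3
        omega
      · rw [h3] at hk0
        omega
      · have := habove k0 h3
        omega
    -- the small divisor
    have hν1 : 1 ≤ ν (Fin.natAdd c p) := by omega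
    set σ' := μ + Finsupp.single (Fin.natAdd c p) 1 with hσ'def
    have hσ'le : σ' ≤ σ := by
      have h1 : σ' ≤ μ + ν :=
        add_le_add (le_refl μ) (Finsupp.single_le_iff.mpr hν1)
      rwa [← hsplitσ] at h1
    have hσ'ne : σ' ≠ σ := by
      intro he
      have hd : degE σ' = degE σ := by rw [he]
      rw [hσ'def, degE_add, degE_single] at hd
      have hdr : degE (m (valE c d α a μ)) ≤ r := deg_m_le_r hα hdeg hmval hr hbμBA
      rw [← hμstd] at hdr
      omega
    have hσ'std := hprop σ' hσ'le hσ'ne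
    have hw : valE c d α a σ' = b' + eVec d α q := by
      rw [hσ'def, valE_add, valE_single_natAdd]
      funext j
      have e1 : bμ j = h0 j + eVec d α q j := by rw [hq]
      have e2 : b' j = h0 j + eVec d α p j := by rw [hp]
      simp only [Pi.add_apply]
      have e3 : valE c d α a μ j = bμ j := by rw [hbμdef]
      rw [e3]
      omega
    obtain ⟨k', hk'ge, hk'pos⟩ :=
      mb_top_pos hα hdeg hBgen hmval hmmin hb'BA.1 hw
    rw [← hσ'std] at hk'pos
    have hval : σ' (Fin.natAdd c k') = if p = k' then 1 else 0 := by
      rw [hσ'def, Finsupp.add_apply, hμy k', single_natAdd_natAdd, zero_add]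
    rw [hval] at hk'pos
    by_cases hpk : p = k'
    · rw [← hpk] at hk'ge
      omega
    · rw [if_neg hpk] at hk'pos
      omega

end L5

section L6
variable {c d α : ℕ} {a : Fin c → Fin d → ℕ} {B : AddSubmonoid (Fin d → ℕ)}
  {m : (Fin d → ℕ) → (Fin (c + d) →₀ ℕ)}
  {K : Type*} [Field K]

lemma pi_monomial (π : MvPolynomial (Fin (c + d)) K →ₐ[K] AddMonoidAlgebra K (Fin d → ℕ))
    (hπ : ∀ v, π (MvPolynomial.X v) = AddMonoidAlgebra.of' K (Fin d → ℕ) (gens c d α a v))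
    (σ : Fin (c + d) →₀ ℕ) :
    π (MvPolynomial.monomial σ (1 : K)) =
      AddMonoidAlgebra.single (valE c d α a σ) 1 := by
  induction σ using Finsupp.induction with
  | zero =>
    have h1 : (MvPolynomial.monomial (0 : Fin (c + d) →₀ ℕ) (1 : K)) = 1 := by
      rw [MvPolynomial.monomial_zero']
      exact map_one MvPolynomial.C
    rw [h1, map_one]
    have h2 : valE c d α a 0 = 0 := by simp [valE]
    rw [h2]
    rfl
  | single_add v n f hvf hn ih =>
    have h1 : MvPolynomial.monomial (Finsupp.single v n + f) (1 : K)
        = MvPolynomial.monomial (Finsupp.single v n) 1 * MvPolynomial.monomial f 1 := by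
      rw [MvPolynomial.monomial_mul, one_mul]
    rw [h1, map_mul, ih]
    have h2 : MvPolynomial.monomial (Finsupp.single v n) (1 : K) = MvPolynomial.X v ^ n :=
      MvPolynomial.X_pow_eq_monomial.symm
    rw [h2, map_pow, hπ v]
    have h3 : AddMonoidAlgebra.of' K (Fin d → ℕ) (gens c d α a v)
        = AddMonoidAlgebra.single (gens c d α a v) 1 := rfl
    rw [h3, AddMonoidAlgebra.single_pow, one_pow, AddMonoidAlgebra.single_mul_single, one_mul,
      valE_add, valE_single]

lemma pi_monomial_coeff (π : MvPolynomial (Fin (c + d)) K →ₐ[K] AddMonoidAlgebra K (Fin d → ℕ))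
    (hπ : ∀ v, π (MvPolynomial.X v) = AddMonoidAlgebra.of' K (Fin d → ℕ) (gens c d α a v))
    (σ : Fin (c + d) →₀ ℕ) (k : K) :
    π (MvPolynomial.monomial σ k) = AddMonoidAlgebra.single (valE c d α a σ) k := by
  have h1 : MvPolynomial.monomial σ k = k • MvPolynomial.monomial σ (1 : K) := by
    rw [MvPolynomial.smul_monomial, smul_eq_mul, mul_one]
  rw [h1, map_smul, pi_monomial π hπ σ, AddMonoidAlgebra.smul_single', mul_one]

lemma companion (π : MvPolynomial (Fin (c + d)) K →ₐ[K] AddMonoidAlgebra K (Fin d → ℕ))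
    (hπ : ∀ v, π (MvPolynomial.X v) = AddMonoidAlgebra.of' K (Fin d → ℕ) (gens c d α a v))
    {f : MvPolynomial (Fin (c + d)) K} (hf0 : π f = 0) {σ : Fin (c + d) →₀ ℕ}
    (hσ : σ ∈ f.support) :
    ∃ τ ∈ f.support, τ ≠ σ ∧ valE c d α a τ = valE c d α a σ := by
  classical
  have h1 : π f = ∑ τ ∈ f.support, AddMonoidAlgebra.single (valE c d α a τ)
      (MvPolynomial.coeff τ f) := by
    conv_lhs => rw [← MvPolynomial.support_sum_monomial_coeff f]
    rw [map_sum]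
    exact Finset.sum_congr rfl (fun τ _ => pi_monomial_coeff π hπ τ _)
  by_contra hc
  push_neg at hc
  have h2 : (0 : AddMonoidAlgebra K (Fin d → ℕ)).coeff (valE c d α a σ) = 0 := rfl
  rw [← hf0, h1] at h2
  rw [AddMonoidAlgebra.coeff_sum, Finset.sum_apply'] at h2
  rw [Finset.sum_eq_single σ] at h2
  · rw [AddMonoidAlgebra.coeff_single, Finsupp.single_apply, if_pos rfl] at h2
    exact MvPolynomial.mem_support_iff.mp hσ h2
  · intro τ hτ hτσ
    rw [AddMonoidAlgebra.coeff_single, Finsupp.single_apply, if_neg (hc τ hτ hτσ)]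
  · intro hσ'
    exact absurd hσ hσ'

lemma nonstandard_of_lead
    (hBgen : B = AddSubmonoid.closure (Set.range a ∪ Set.range (eVec d α)))
    (hmmin : ∀ b ∈ B, ∀ σ, valE c d α a σ = b → m b = σ ∨ grevlex (m b) σ)
    (π : MvPolynomial (Fin (c + d)) K →ₐ[K] AddMonoidAlgebra K (Fin d → ℕ))
    (hπ : ∀ v, π (MvPolynomial.X v) = AddMonoidAlgebra.of' K (Fin d → ℕ) (gens c d α a v))
    {f : MvPolynomial (Fin (c + d)) K} (hf0 : π f = 0) {σ : Fin (c + d) →₀ ℕ}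
    (hlead : IsLeadMon f σ) : σ ≠ m (valE c d α a σ) := by
  obtain ⟨τ, hτs, hτσ, hτval⟩ := companion π hπ hf0 hlead.1
  intro heq
  have h1 := hmmin (valE c d α a σ) (valE_mem hBgen σ) τ hτval
  rw [← heq] at h1
  rcases h1 with h1 | h1
  · exact hτσ h1.symm
  · rcases hlead.2 τ hτs with h2 | h2
    · exact hτσ h2
    · exact grevlex_asymm h1 h2

lemma monomial_mem_initial
    (hBgen : B = AddSubmonoid.closure (Set.range a ∪ Set.range (eVec d α)))
    (hmval : ∀ b ∈ B, valE c d α a (m b) = b)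
    (hmmin : ∀ b ∈ B, ∀ σ, valE c d α a σ = b → m b = σ ∨ grevlex (m b) σ)
    (π : MvPolynomial (Fin (c + d)) K →ₐ[K] AddMonoidAlgebra K (Fin d → ℕ))
    (hπ : ∀ v, π (MvPolynomial.X v) = AddMonoidAlgebra.of' K (Fin d → ℕ) (gens c d α a v))
    {σ : Fin (c + d) →₀ ℕ} (hns : σ ≠ m (valE c d α a σ)) :
    MvPolynomial.monomial σ (1 : K) ∈ initialIdeal (RingHom.ker π.toRingHom) := by
  classical
  set b := valE c d α a σ with hbdef
  set f : MvPolynomial (Fin (c + d)) K :=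
    MvPolynomial.monomial σ 1 - MvPolynomial.monomial (m b) 1 with hfdef
  have hbB : b ∈ B := valE_mem hBgen σ
  have hπf : π f = 0 := by
    rw [hfdef, map_sub, pi_monomial π hπ, pi_monomial π hπ, hmval b hbB, hbdef]
    exact sub_self _
  have hker : f ∈ RingHom.ker π.toRingHom := by
    rw [RingHom.mem_ker]
    exact hπf
  have hcσ : MvPolynomial.coeff σ f = 1 := by
    rw [hfdef, MvPolynomial.coeff_sub, MvPolynomial.coeff_monomial, if_pos rfl,
      MvPolynomial.coeff_monomial, if_neg (fun h => hns h.symm), sub_zero]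
  have hsupp : σ ∈ f.support := MvPolynomial.mem_support_iff.mpr (by rw [hcσ]; exact one_ne_zero)
  have hlead : IsLeadMon f σ := by
    refine ⟨hsupp, fun τ hτ => ?_⟩
    by_cases h1 : τ = σ
    · exact Or.inl h1
    by_cases h2 : τ = m b
    · right
      rcases hmmin b hbB σ hbdef.symm with h3 | h3
      · exact absurd h3.symm hns
      · rw [h2]; exact h3
    · exfalso
      have : MvPolynomial.coeff τ f = 0 := by
        rw [hfdef, MvPolynomial.coeff_sub, MvPolynomial.coeff_monomial,
          if_neg (fun h => h1 h.symm), MvPolynomial.coeff_monomial,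
          if_neg (fun h => h2 h.symm), sub_zero]
      exact MvPolynomial.mem_support_iff.mp hτ this
  exact Ideal.subset_span ⟨f, hker, σ, hlead, rfl⟩

end L6

section L7
variable {c d α : ℕ} {a : Fin c → Fin d → ℕ} {B : AddSubmonoid (Fin d → ℕ)}
  {m : (Fin d → ℕ) → (Fin (c + d) →₀ ℕ)}

lemma N2_bound (hα : 0 < α) (hdeg : ∀ i, ∑ j, a i j = α)
    (hBgen : B = AddSubmonoid.closure (Set.range a ∪ Set.range (eVec d α)))
    (hmval : ∀ b ∈ B, valE c d α a (m b) = b)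
    {r : ℕ} (hr : IsGreatest {k | ∃ b ∈ BA B α, ∑ j, b j = α * k} r)
    (hdec : ∀ Γ, IsClass B α Γ → ∀ h : Fin d → ℕ,
      (∀ j, IsLeast {v | ∃ b ∈ Γ, v = b j} (h j)) →
      (h ∈ Γ ∨ ∀ b ∈ Γ, ∃ k : Fin d, b = fun j => h j + eVec d α k j)) :
    ∀ n ∈ N2set c α B m, degE n ≤ r + 1 := by
  rintro n ⟨Γ, hcls, bi, hbi, bj, hbj, hlt, heq⟩
  obtain ⟨x, hxBA, hΓ⟩ := hcls
  set h0 : Fin d → ℕ := fun j => sInf {v | ∃ b'' ∈ Γ, v = b'' j} with hh0def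
  have hls : ∀ j, IsLeast {v | ∃ b'' ∈ Γ, v = b'' j} (h0 j) :=
    fun j => class_least Γ hbi j
  rcases hdec Γ ⟨x, hxBA, hΓ⟩ h0 hls with hh0 | hstruct
  · have h1 : bi = h0 := class_singleton hα hΓ hls hh0 hbi
    have h2 : bj = h0 := class_singleton hα hΓ hls hh0 hbj
    rw [h1, h2] at hlt
    exact absurd hlt (ltCls_irrefl h0)
  · obtain ⟨k, hk⟩ := hstruct bi hbi
    obtain ⟨l, hl⟩ := hstruct bj hbj
    have hkl : k ≠ l := by
      intro he
      have hbibj : bi = bj := by rw [hk, hl, he]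
      rw [hbibj] at hlt
      exact ltCls_irrefl bj hlt
    have hjoin : joinSub bi bj = eVec d α k := by
      rw [hk, hl]
      exact joinSub_eVec hkl
    have hbjBA : bj ∈ BA B α := by
      rw [hΓ] at hbj
      exact hbj.1
    have h3 : degE (m bj) ≤ r := deg_m_le_r hα hdeg hmval hr hbjBA
    rw [heq, degE_add, hjoin, degE_m_eVec hα hdeg hBgen hmval]
    omega

end L7

end SimplicialToric


/-- If each ideal in the decomposition of `K[B]` is the unit ideal
or is generated in degree 1, then all monomials of `N₁ ∪ N₂` have degree at most
`r(K[B]) + 1`; in particular `in_≺(ker π)` is generated in degrees `≤ r(K[B]) + 1`. -/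
theorem degree_bound_of_decomposition
    (c d α : ℕ) (hα : 0 < α)
    (a : Fin c → Fin d → ℕ) (B : AddSubmonoid (Fin d → ℕ))
    (hBgen : B = AddSubmonoid.closure (Set.range a ∪ Set.range (eVec d α)))
    (hhilb : Hilb B = Set.range a ∪ Set.range (eVec d α))
    (hdeg : ∀ i, ∑ j, a i j = α)
    (m : (Fin d → ℕ) → (Fin (c + d) →₀ ℕ))
    (hmval : ∀ b ∈ B, valE c d α a (m b) = b)
    (hmmin : ∀ b ∈ B, ∀ σ, valE c d α a σ = b → m b = σ ∨ grevlex (m b) σ)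
    (K : Type*) [Field K]
    (π : MvPolynomial (Fin (c + d)) K →ₐ[K] AddMonoidAlgebra K (Fin d → ℕ))
    (hπ : ∀ v, π (MvPolynomial.X v) = AddMonoidAlgebra.of' K (Fin d → ℕ) (gens c d α a v))
    (r : ℕ) (hr : IsGreatest {k | ∃ b ∈ BA B α, ∑ j, b j = α * k} r)
    (hdec : ∀ Γ, IsClass B α Γ → ∀ h : Fin d → ℕ,
      (∀ j, IsLeast {v | ∃ b ∈ Γ, v = b j} (h j)) →
      (h ∈ Γ ∨ ∀ b ∈ Γ, ∃ k : Fin d, b = fun j => h j + eVec d α k j)) :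
    (∀ n ∈ N1set c d α a B m ∪ N2set c α B m, degE n ≤ r + 1) ∧
    ∃ Ns : Set (Fin (c + d) →₀ ℕ), (∀ n ∈ Ns, degE n ≤ r + 1) ∧
      initialIdeal (RingHom.ker π.toRingHom)
        = Ideal.span ((fun n => MvPolynomial.monomial n (1 : K)) '' Ns) := by
  constructor
  · intro n hn
    rcases hn with hn | hn
    · obtain ⟨i, b, hbBA, heq, _⟩ := hn
      rw [heq, degE_add, degE_single]
      have h1 := deg_m_le_r hα hdeg hmval hr hbBA
      omega
    · exact N2_bound hα hdeg hBgen hmval hr hdec n hn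
  · refine ⟨{σ | degE σ ≤ r + 1 ∧ σ ≠ m (valE c d α a σ)}, fun n hn => hn.1, ?_⟩
    apply le_antisymm
    · unfold initialIdeal
      apply Ideal.span_le.mpr
      rintro g ⟨f, hf, σ, hlead, rfl⟩
      have hf0 : π f = 0 := RingHom.mem_ker.mp hf
      have hns := nonstandard_of_lead hBgen hmmin π hπ hf0 hlead
      obtain ⟨σ₀, hle0, hdeg0, hns0⟩ :=
        key_divisor hα hdeg hBgen hmval hmmin hr hdec (degE σ) σ (le_refl _) hns
      have hsplit : MvPolynomial.monomial σ (1 : K)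
          = MvPolynomial.monomial (σ - σ₀) 1 * MvPolynomial.monomial σ₀ 1 := by
        rw [MvPolynomial.monomial_mul, one_mul, tsub_add_cancel_of_le hle0]
      rw [hsplit]
      refine Ideal.mul_mem_left _ _ (Ideal.subset_span ?_)
      exact ⟨σ₀, ⟨hdeg0, hns0⟩, rfl⟩
    · apply Ideal.span_le.mpr
      rintro g ⟨σ₀, ⟨hdeg0, hns0⟩, rfl⟩
      exact monomial_mem_initial hBgen hmval hmmin π hπ hns0
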